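/- arXiv:1904.01358 — 2 statements merged into one kernel-verified Lean document; each statement's English description precedes it below -/
import Mathlib

section
/- For strong compositions α and β, the product of monomial quasisymmetric polynomials in n variables satisfies M_α · M_β = ∑_γ c_{α,β}^γ M_γ, where c_{α,β}^γ is the multiplicity of the strong composition γ in the overlapping shuffle product α ⧢_o β. -/
open MvPolynomial

/-- The monomial `x^b` in `n` variables. -/
noncomputable def xpow (n : ℕ) (b : Fin n → ℕ) : MvPolynomial (Fin n) ℤ :=
  ∏ i, X i ^ b i

/-- The positive part of a weak composition: the strong composition obtained by deleting
all zero entries. -/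
def posPart {n : ℕ} (b : Fin n → ℕ) : List ℕ :=
  (List.ofFn b).filter (fun x => x ≠ 0)

/-- The monomial quasisymmetric polynomial `M_α(x_1, …, x_n)`: the sum of `x^b` over all
weak compositions `b` (supported in positions `1, …, n`) with positive part `α`. -/
noncomputable def Mq (n : ℕ) (α : List ℕ) : MvPolynomial (Fin n) ℤ :=
  ∑ᶠ (b : Fin n → ℕ) (_ : posPart b = α), xpow n b

/-- `t` is an overlapping shuffle of `α` and `β`: a surjection from positions of the
concatenation `αβ` onto `{1, …, k}` that is strictly increasing on the positions of `α`
and on the positions of `β`. -/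
def IsOvShuffle (α β : List ℕ) (k : ℕ)
    (t : Fin (α.length + β.length) → Fin k) : Prop :=
  Function.Surjective t ∧
  ∀ i j : Fin (α.length + β.length), (i : ℕ) < (j : ℕ) →
    ((j : ℕ) < α.length ∨ α.length ≤ (i : ℕ)) → t i < t j

/-- The strong composition `γ` produced by an overlapping shuffle `t`:
`γ_i = ∑_{t(j) = i} (αβ)_j`. -/
def ovShuffleResult (α β : List ℕ) (k : ℕ)
    (t : Fin (α.length + β.length) → Fin k) : List ℕ :=
  List.ofFn (fun i : Fin k =>
    ∑ j ∈ Finset.univ.filter (fun j => t j = i), (α ++ β).getD (j : ℕ) 0)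

/-- The multiplicity of `γ` in the overlapping shuffle product `α ⧢_o β`. -/
noncomputable def ovShuffleMult (α β γ : List ℕ) : ℕ :=
  Nat.card {p : Σ k : ℕ, Fin (α.length + β.length) → Fin k //
    IsOvShuffle α β p.1 p.2 ∧ ovShuffleResult α β p.1 p.2 = γ}

section Aux

variable {n m : ℕ}

/-- Embed a composition `γ` along a map `e` of positions. -/
def embed (γ : List ℕ) {m n : ℕ} (e : Fin m → Fin n) : Fin n → ℕ :=
  fun i => ∑ j : Fin m, if e j = i then γ.getD j 0 else 0

lemma embed_apply_mem (γ : List ℕ) {e : Fin m → Fin n} (he : Function.Injective e)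
    (j : Fin m) : embed γ e (e j) = γ.getD j 0 := by
  rw [embed, Finset.sum_eq_single j (fun j' _ hne => if_neg (fun h => hne (he h)))
    (fun h => absurd (Finset.mem_univ j) h), if_pos rfl]

lemma embed_apply_not_mem (γ : List ℕ) {e : Fin m → Fin n} {i : Fin n}
    (h : ∀ j, e j ≠ i) : embed γ e i = 0 :=
  Finset.sum_eq_zero fun j _ => if_neg (h j)

lemma posPart_eq_map_filter (b : Fin n → ℕ) :
    posPart b = ((List.finRange n).filter (fun i => b i ≠ 0)).map b := by
  unfold _root_.posPart
  rw [List.ofFn_eq_map, List.filter_map]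
  rfl

lemma sorted_eq_of_mem_iff {L₁ L₂ : List (Fin n)} (h₁ : L₁.Pairwise (· < ·))
    (h₂ : L₂.Pairwise (· < ·)) (h : ∀ x, x ∈ L₁ ↔ x ∈ L₂) : L₁ = L₂ := by
  refine List.Perm.eq_of_sortedLE h₁.sortedLT.sortedLE h₂.sortedLT.sortedLE ?_
  refine List.perm_of_nodup_nodup_toFinset_eq h₁.nodup h₂.nodup ?_
  ext x
  simp [h x]

end Aux
section Key

variable {n m : ℕ}

lemma filter_embed_eq_ofFn {γ : List ℕ} (hγ : ∀ x ∈ γ, 0 < x) (hm : γ.length = m)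
    {e : Fin m → Fin n} (he : StrictMono e) :
    (List.finRange n).filter (fun i => embed γ e i ≠ 0) = List.ofFn e := by
  refine sorted_eq_of_mem_iff ?_ (List.sortedLT_ofFn_iff.mpr he).pairwise ?_
  · exact List.Pairwise.sublist (List.filter_sublist) (List.pairwise_lt_finRange n)
  · intro x
    simp only [List.mem_filter, List.mem_finRange, true_and, List.mem_ofFn,
      ne_eq, decide_not, Bool.not_eq_true', decide_eq_false_iff_not, Set.mem_range]
    constructor
    · intro hx
      by_contra hc
      push_neg at hc
      exact hx (embed_apply_not_mem γ hc)
    · rintro ⟨j, rfl⟩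
      rw [embed_apply_mem γ he.injective j]
      have hj : (j : ℕ) < γ.length := by omega
      rw [List.getD_eq_getElem γ 0 hj]
      exact (hγ _ (List.getElem_mem hj)).ne'

lemma posPart_embed {γ : List ℕ} (hγ : ∀ x ∈ γ, 0 < x) (hm : γ.length = m)
    {e : Fin m → Fin n} (he : StrictMono e) :
    posPart (embed γ e) = γ := by
  rw [posPart_eq_map_filter, filter_embed_eq_ofFn hγ hm he, List.map_ofFn]
  subst hm
  conv_rhs => rw [← List.ofFn_getElem (xs := γ)]
  congr 1
  funext j
  rw [Function.comp_apply, embed_apply_mem γ he.injective j,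
    List.getD_eq_getElem γ 0 j.2]

lemma embed_injOn {γ : List ℕ} (hγ : ∀ x ∈ γ, 0 < x) (hm : γ.length = m) :
    Set.InjOn (embed γ) {e : Fin m → Fin n | StrictMono e} := by
  intro e he e' he' hee
  have h1 := filter_embed_eq_ofFn hγ hm he
  have h2 := filter_embed_eq_ofFn hγ hm he'
  rw [hee] at h1
  exact List.ofFn_injective (h1.symm.trans h2)

lemma exists_embed {γ : List ℕ} {b : Fin n → ℕ} (hb : posPart b = γ) (hm : γ.length = m) :
    ∃ e : Fin m → Fin n, StrictMono e ∧ embed γ e = b := by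
  classical
  set L := (List.finRange n).filter (fun i => b i ≠ 0) with hL
  have hmap : γ = L.map b := by rw [← hb, posPart_eq_map_filter]
  have hlen : L.length = m := by rw [← hm, hmap, List.length_map]
  have hsorted : L.Pairwise (· < ·) :=
    List.Pairwise.sublist (List.filter_sublist) (List.pairwise_lt_finRange n)
  have hmemL : ∀ x, x ∈ L ↔ b x ≠ 0 := by
    intro x; simp [hL, List.mem_filter]
  refine ⟨fun j => L.get (Fin.cast hlen.symm j), ?_, ?_⟩
  · intro a c hac
    exact hsorted.sortedLT.strictMono_get (show Fin.cast hlen.symm a < Fin.cast hlen.symm c from hac)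
  · set e : Fin m → Fin n := fun j => L.get (Fin.cast hlen.symm j) with he
    have einj : Function.Injective e := by
      intro a c hac
      have := hsorted.sortedLT.strictMono_get.injective hac
      simpa [Fin.ext_iff] using Fin.val_eq_of_eq this
    funext i
    by_cases hbi : b i = 0
    · have : ∀ j, e j ≠ i := by
        intro j hj
        have hget : ∀ jj : Fin L.length, L.get jj ∈ L := fun jj => List.get_mem L jj
        have : e j ∈ L := hget _
        rw [hj, hmemL] at this
        exact this hbi
      rw [embed_apply_not_mem γ this, hbi]
    · have hiL : i ∈ L := (hmemL i).mpr hbi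
      obtain ⟨⟨j0, hj0lt⟩, hj0⟩ := List.mem_iff_get.mp hiL
      have hjm : j0 < m := by omega
      have hej : e ⟨j0, hjm⟩ = i := by
        rw [he]; exact hj0
      rw [← hej, embed_apply_mem γ einj ⟨j0, hjm⟩]
      have hjγ : j0 < γ.length := by omega
      rw [List.getD_eq_getElem γ 0 hjγ, List.getElem_of_eq hmap, List.getElem_map]
      simp only [List.get_eq_getElem] at hj0
      rw [hj0, hej]

lemma setOf_posPart_eq {γ : List ℕ} (hγ : ∀ x ∈ γ, 0 < x) (hm : γ.length = m) :
    {b : Fin n → ℕ | posPart b = γ} = embed γ '' {e : Fin m → Fin n | StrictMono e} := by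
  ext b
  constructor
  · intro hb
    obtain ⟨e, he, hee⟩ := exists_embed hb hm
    exact ⟨e, he, hee⟩
  · rintro ⟨e, he, rfl⟩
    exact posPart_embed hγ hm he

/-- The finset of strictly monotone maps. -/
noncomputable def SM (n m : ℕ) : Finset (Fin m → Fin n) :=
  Set.Finite.toFinset (Set.toFinite {e : Fin m → Fin n | StrictMono e})

lemma mem_SM {e : Fin m → Fin n} : e ∈ SM n m ↔ StrictMono e :=
  Set.Finite.mem_toFinset _

lemma Mq_eq_sum {γ : List ℕ} (hγ : ∀ x ∈ γ, 0 < x) (hm : γ.length = m) :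
    Mq n γ = ∑ e ∈ SM n m, xpow n (embed γ e) := by
  have h0 : Mq n γ = ∑ᶠ b ∈ {b : Fin n → ℕ | posPart b = γ}, xpow n b := rfl
  rw [h0, setOf_posPart_eq hγ hm, finsum_mem_image (embed_injOn hγ hm),
    ← finsum_mem_coe_finset]
  congr 1
  simp [SM]

end Key
section Shuffle

variable (α β : List ℕ)

/-- The type of overlapping shuffles of `α` and `β`. -/
abbrev ShufT := {p : Σ k : ℕ, Fin (α.length + β.length) → Fin k //
    IsOvShuffle α β p.1 p.2}

lemma shuf_k_le (p : ShufT α β) : p.1.1 ≤ α.length + β.length := by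
  simpa using Fintype.card_le_of_surjective _ p.2.1

instance : Finite (ShufT α β) := by
  apply Finite.of_injective
    (β := Σ k : Fin (α.length + β.length + 1), (Fin (α.length + β.length) → Fin k))
    (fun p => ⟨⟨p.1.1, Nat.lt_succ_of_le (shuf_k_le α β p)⟩, p.1.2⟩)
  rintro ⟨⟨k, t⟩, hp⟩ ⟨⟨k', t'⟩, hq⟩ h
  simp only at h
  injection h with h1 h2
  have hk : k = k' := congrArg Fin.val h1
  subst hk
  cases eq_of_heq h2
  rfl

noncomputable instance : Fintype (ShufT α β) := Fintype.ofFinite _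

lemma length_result {k : ℕ} (t : Fin (α.length + β.length) → Fin k) :
    (ovShuffleResult α β k t).length = k := by
  rw [ovShuffleResult, List.length_ofFn]

lemma result_pos (hα : ∀ x ∈ α, 0 < x) (hβ : ∀ x ∈ β, 0 < x) {k : ℕ}
    {t : Fin (α.length + β.length) → Fin k} (hp : IsOvShuffle α β k t) :
    ∀ x ∈ ovShuffleResult α β k t, 0 < x := by
  intro x hx
  rw [ovShuffleResult, List.mem_ofFn] at hx
  obtain ⟨i, rfl⟩ := hx
  obtain ⟨j, hj⟩ := hp.1 i
  refine Finset.sum_pos ?_ ⟨j, by simp [hj]⟩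
  intro q _
  have hql : (q : ℕ) < (α ++ β).length := by
    rw [List.length_append]; exact q.2
  rw [List.getD_eq_getElem _ 0 hql]
  rcases List.mem_append.mp (List.getElem_mem hql) with h | h
  exacts [hα _ h, hβ _ h]

lemma mult_eq_zero {γ : List ℕ} (hα : ∀ x ∈ α, 0 < x) (hβ : ∀ x ∈ β, 0 < x)
    (hγ : ¬ ∀ x ∈ γ, 0 < x) : ovShuffleMult α β γ = 0 := by
  rw [ovShuffleMult, Nat.card_eq_zero]
  left
  exact ⟨fun p => hγ (p.2.2 ▸ result_pos α β hα hβ p.2.1)⟩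

open Classical in
lemma mult_eq_card (γ : List ℕ) :
    ovShuffleMult α β γ =
      (Finset.univ.filter
        (fun p : ShufT α β => ovShuffleResult α β p.1.1 p.1.2 = γ)).card := by
  rw [ovShuffleMult]
  rw [Nat.card_eq_of_bijective
    (f := fun q : {p : Σ k : ℕ, Fin (α.length + β.length) → Fin k //
        IsOvShuffle α β p.1 p.2 ∧ ovShuffleResult α β p.1 p.2 = γ} =>
      (⟨⟨q.1, q.2.1⟩, q.2.2⟩ : {p : ShufT α β // ovShuffleResult α β p.1.1 p.1.2 = γ}))
    ⟨fun a b hab => by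
        apply Subtype.ext
        have := congrArg (fun z => z.1.1) hab
        exact this,
      fun p => ⟨⟨p.1.1, ⟨p.1.2, p.2⟩⟩, rfl⟩⟩]
  rw [Nat.card_eq_fintype_card, Fintype.card_subtype]

end Shuffle
section EmbedAdd

variable {n : ℕ} (α β : List ℕ)

lemma xpow_add {a b : Fin n → ℕ} :
    xpow n (fun i => a i + b i) = xpow n a * xpow n b := by
  rw [xpow, xpow, xpow, ← Finset.prod_mul_distrib]
  exact Finset.prod_congr rfl fun i _ => pow_add _ _ _

lemma getD_result {k : ℕ} (t : Fin (α.length + β.length) → Fin k) (q : Fin k) :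
    (ovShuffleResult α β k t).getD (q : ℕ) 0 =
      ∑ j ∈ Finset.univ.filter (fun j => t j = q), (α ++ β).getD (j : ℕ) 0 := by
  rw [ovShuffleResult, List.getD_eq_getElem _ 0 (by rw [List.length_ofFn]; exact q.2),
    List.getElem_ofFn]

lemma embed_add {k : ℕ} (t : Fin (α.length + β.length) → Fin k) (f : Fin k → Fin n)
    (i : Fin n) :
    embed α (fun j => f (t (Fin.castAdd β.length j))) i +
      embed β (fun j => f (t (Fin.natAdd α.length j))) i =
      embed (ovShuffleResult α β k t) f i := by
  classical
  have hrhs : embed (ovShuffleResult α β k t) f i =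
      ∑ j : Fin (α.length + β.length),
        if f (t j) = i then (α ++ β).getD (j : ℕ) 0 else 0 := by
    rw [embed]
    rw [show (∑ q : Fin k, if f q = i then (ovShuffleResult α β k t).getD (q : ℕ) 0 else 0)
        = ∑ q : Fin k, ∑ j ∈ Finset.univ.filter (fun j => t j = q),
            (if f (t j) = i then (α ++ β).getD (j : ℕ) 0 else 0) from ?_]
    · exact Finset.sum_fiberwise_of_maps_to (fun j _ => Finset.mem_univ (t j)) _
    · refine Finset.sum_congr rfl fun q _ => ?_
      rw [getD_result]
      by_cases hq : f q = i
      · rw [if_pos hq]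
        refine Finset.sum_congr rfl fun j hj => ?_
        rw [if_pos (by rw [(Finset.mem_filter.mp hj).2, hq])]
      · rw [if_neg hq]
        refine (Finset.sum_eq_zero fun j hj => ?_).symm
        rw [if_neg (by rw [(Finset.mem_filter.mp hj).2]; exact hq)]
  rw [hrhs, Fin.sum_univ_add]
  congr 1
  · rw [embed]
    refine Finset.sum_congr rfl fun j _ => ?_
    congr 1
    rw [Fin.coe_castAdd, List.getD_append _ _ _ _ j.2]
  · rw [embed]
    refine Finset.sum_congr rfl fun j _ => ?_
    congr 1
    rw [Fin.coe_natAdd, List.getD_append_right _ _ _ _ (Nat.le_add_right _ _)]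
    congr 1
    omega

end EmbedAdd
section Bij

variable {n : ℕ} {α β : List ℕ}

lemma sig_ext {k k' : ℕ} {t : Fin (α.length + β.length) → Fin k}
    {t' : Fin (α.length + β.length) → Fin k'}
    {h : IsOvShuffle α β k t} {h' : IsOvShuffle α β k' t'}
    {f : Fin k → Fin n} {f' : Fin k' → Fin n}
    (hk : k = k') (ht : ∀ i, ((t i : ℕ)) = ((t' i : ℕ)))
    (hf : ∀ (j : ℕ) (hj : j < k) (hj' : j < k'), f ⟨j, hj⟩ = f' ⟨j, hj'⟩) :
    (⟨⟨⟨k, t⟩, h⟩, f⟩ : Σ p : ShufT α β, (Fin p.1.1 → Fin n)) = ⟨⟨⟨k', t'⟩, h'⟩, f'⟩ := by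
  subst hk
  have ht2 : t = t' := funext fun i => Fin.ext (ht i)
  subst ht2
  have hf2 : f = f' := funext fun j => by
    rcases j with ⟨j, hj⟩; exact hf j hj hj
  subst hf2
  rfl

variable (α β) in
/-- The union of the ranges of two position maps. -/
def unionS (e₁ : Fin α.length → Fin n) (e₂ : Fin β.length → Fin n) : Finset (Fin n) :=
  Finset.image e₁ Finset.univ ∪ Finset.image e₂ Finset.univ

lemma mem_unionS_left {e₁ : Fin α.length → Fin n} {e₂ : Fin β.length → Fin n}
    (a : Fin α.length) : e₁ a ∈ unionS α β e₁ e₂ :=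
  Finset.mem_union_left _ (Finset.mem_image_of_mem _ (Finset.mem_univ a))

lemma mem_unionS_right {e₁ : Fin α.length → Fin n} {e₂ : Fin β.length → Fin n}
    (a : Fin β.length) : e₂ a ∈ unionS α β e₁ e₂ :=
  Finset.mem_union_right _ (Finset.mem_image_of_mem _ (Finset.mem_univ a))

variable (α β) in
/-- The shuffle associated to a pair of position maps. -/
noncomputable def phiT (e₁ : Fin α.length → Fin n) (e₂ : Fin β.length → Fin n) :
    Fin (α.length + β.length) → Fin (unionS α β e₁ e₂).card := fun i =>
  if h : (i : ℕ) < α.length then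
    ((unionS α β e₁ e₂).orderIsoOfFin rfl).symm ⟨e₁ ⟨i, h⟩, mem_unionS_left _⟩
  else
    ((unionS α β e₁ e₂).orderIsoOfFin rfl).symm
      ⟨e₂ ⟨(i : ℕ) - α.length, by have := i.2; omega⟩, mem_unionS_right _⟩

lemma orderEmb_symm (S : Finset (Fin n)) (x : S) :
    S.orderEmbOfFin rfl ((S.orderIsoOfFin rfl).symm x) = ↑x := by
  rw [← Finset.coe_orderIsoOfFin_apply, OrderIso.apply_symm_apply]

lemma phi_comp_left (e₁ : Fin α.length → Fin n) (e₂ : Fin β.length → Fin n)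
    (a : Fin α.length) :
    (unionS α β e₁ e₂).orderEmbOfFin rfl (phiT α β e₁ e₂ (Fin.castAdd β.length a)) = e₁ a := by
  rw [phiT, dif_pos (by simpa using a.2 : ((Fin.castAdd β.length a : Fin _) : ℕ) < α.length),
    orderEmb_symm]
  rfl

lemma phi_comp_right (e₁ : Fin α.length → Fin n) (e₂ : Fin β.length → Fin n)
    (a : Fin β.length) :
    (unionS α β e₁ e₂).orderEmbOfFin rfl (phiT α β e₁ e₂ (Fin.natAdd α.length a)) = e₂ a := by
  have hna : ¬ ((Fin.natAdd α.length a : Fin _) : ℕ) < α.length := by simp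
  rw [phiT, dif_neg hna, orderEmb_symm]
  exact congrArg e₂ (Fin.ext (by simp))

lemma phiOv {e₁ : Fin α.length → Fin n} {e₂ : Fin β.length → Fin n}
    (he₁ : StrictMono e₁) (he₂ : StrictMono e₂) :
    IsOvShuffle α β (unionS α β e₁ e₂).card (phiT α β e₁ e₂) := by
  constructor
  · intro j
    have hmem := ((unionS α β e₁ e₂).orderIsoOfFin rfl j).2
    rcases Finset.mem_union.mp hmem with hmem' | hmem'
    · obtain ⟨a, -, ha⟩ := Finset.mem_image.mp hmem'
      refine ⟨Fin.castAdd β.length a, ?_⟩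
      rw [phiT, dif_pos (by simpa using a.2 :
        ((Fin.castAdd β.length a : Fin _) : ℕ) < α.length), OrderIso.symm_apply_eq]
      exact Subtype.ext (by simpa using ha)
    · obtain ⟨a, -, ha⟩ := Finset.mem_image.mp hmem'
      refine ⟨Fin.natAdd α.length a, ?_⟩
      have hna : ¬ ((Fin.natAdd α.length a : Fin _) : ℕ) < α.length := by simp
      rw [phiT, dif_neg hna, OrderIso.symm_apply_eq]
      refine Subtype.ext ?_
      exact (congrArg e₂ (Fin.ext (by simp))).trans ha
  · intro i j hij hcond
    have hmono := ((unionS α β e₁ e₂).orderIsoOfFin rfl).symm.strictMono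
    rcases hcond with hj | hi
    · have hi' : (i : ℕ) < α.length := lt_trans hij hj
      rw [phiT, dif_pos hi', phiT, dif_pos hj]
      exact hmono (by simpa [Subtype.mk_lt_mk] using he₁ (show (⟨i, hi'⟩ : Fin α.length) < ⟨j, hj⟩ from hij))
    · have hj' : ¬ (j : ℕ) < α.length := by omega
      have hi' : ¬ (i : ℕ) < α.length := by omega
      rw [phiT, dif_neg hi', phiT, dif_neg hj']
      refine hmono ?_
      simp only [Subtype.mk_lt_mk]
      exact he₂ (show ((⟨(i : ℕ) - α.length, _⟩ : Fin β.length)) < ⟨(j : ℕ) - α.length, _⟩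
        from by simp only [Fin.mk_lt_mk]; omega)

end Bij
section RightInv

variable {n : ℕ} {α β : List ℕ}

lemma unionS_eq {k : ℕ} {t : Fin (α.length + β.length) → Fin k}
    (hov : IsOvShuffle α β k t) (f : Fin k → Fin n) :
    unionS α β (fun a => f (t (Fin.castAdd β.length a)))
        (fun a => f (t (Fin.natAdd α.length a))) = Finset.image f Finset.univ := by
  ext x
  simp only [unionS, Finset.mem_union, Finset.mem_image, Finset.mem_univ, true_and]
  constructor
  · rintro (⟨a, rfl⟩ | ⟨a, rfl⟩) <;> exact ⟨_, rfl⟩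
  · rintro ⟨q, rfl⟩
    obtain ⟨i, rfl⟩ := hov.1 q
    by_cases hi : (i : ℕ) < α.length
    · exact Or.inl ⟨⟨i, hi⟩, by rw [show Fin.castAdd β.length ⟨(i : ℕ), hi⟩ = i from Fin.ext rfl]⟩
    · refine Or.inr ⟨⟨(i : ℕ) - α.length, by have := i.2; omega⟩, ?_⟩
      rw [show Fin.natAdd α.length ⟨(i : ℕ) - α.length, _⟩ = i from Fin.ext (by simp; omega)]

lemma phi_psi {k : ℕ} {t : Fin (α.length + β.length) → Fin k}
    (hov : IsOvShuffle α β k t) {f : Fin k → Fin n} (hf : StrictMono f)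
    (hov2 : IsOvShuffle α β
      (unionS α β (fun a => f (t (Fin.castAdd β.length a)))
        (fun a => f (t (Fin.natAdd α.length a)))).card
      (phiT α β (fun a => f (t (Fin.castAdd β.length a)))
        (fun a => f (t (Fin.natAdd α.length a))))) :
    (⟨⟨⟨_, phiT α β (fun a => f (t (Fin.castAdd β.length a)))
          (fun a => f (t (Fin.natAdd α.length a)))⟩, hov2⟩,
      ⇑((unionS α β (fun a => f (t (Fin.castAdd β.length a)))
          (fun a => f (t (Fin.natAdd α.length a)))).orderEmbOfFin rfl)⟩ :
        Σ p : ShufT α β, (Fin p.1.1 → Fin n)) = ⟨⟨⟨k, t⟩, hov⟩, f⟩ := by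
  set e₁ : Fin α.length → Fin n := fun a => f (t (Fin.castAdd β.length a)) with he₁def
  set e₂ : Fin β.length → Fin n := fun a => f (t (Fin.natAdd α.length a)) with he₂def
  have hS : unionS α β e₁ e₂ = Finset.image f Finset.univ := unionS_eq hov f
  have hk : (unionS α β e₁ e₂).card = k := by
    rw [hS, Finset.card_image_of_injective _ hf.injective, Finset.card_univ, Fintype.card_fin]
  have hfeq : ∀ (j : ℕ) (hj : j < (unionS α β e₁ e₂).card) (hj' : j < k),
      (unionS α β e₁ e₂).orderEmbOfFin rfl ⟨j, hj⟩ = f ⟨j, hj'⟩ := by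
    have hfu : f = (unionS α β e₁ e₂).orderEmbOfFin hk :=
      Finset.orderEmbOfFin_unique hk
        (fun x => by rw [hS]; exact Finset.mem_image_of_mem f (Finset.mem_univ x)) hf
    intro j hj hj'
    conv_rhs => rw [hfu]
    exact Finset.orderEmbOfFin_eq_orderEmbOfFin_iff.mpr rfl
  have h2 : ∀ jj : Fin (unionS α β e₁ e₂).card,
      (unionS α β e₁ e₂).orderEmbOfFin rfl jj = f ⟨(jj : ℕ), hk ▸ jj.2⟩ :=
    fun jj => hfeq jj.1 jj.2 _
  have ht : ∀ i, ((phiT α β e₁ e₂ i : ℕ)) = ((t i : ℕ)) := by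
    intro i
    have h1 : (unionS α β e₁ e₂).orderEmbOfFin rfl (phiT α β e₁ e₂ i) = f (t i) := by
      by_cases hi : (i : ℕ) < α.length
      · have hcl := phi_comp_left (α := α) (β := β) e₁ e₂ ⟨(i : ℕ), hi⟩
        rw [show Fin.castAdd β.length ⟨(i : ℕ), hi⟩ = i from Fin.ext rfl] at hcl
        rw [hcl, he₁def]
        exact congrArg f (congrArg t (Fin.ext rfl))
      · have hii : (i : ℕ) - α.length < β.length := by have := i.2; omega
        have hcr := phi_comp_right (α := α) (β := β) e₁ e₂ ⟨(i : ℕ) - α.length, hii⟩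
        rw [show Fin.natAdd α.length ⟨(i : ℕ) - α.length, hii⟩ = i
          from Fin.ext (by simp; omega)] at hcr
        rw [hcr, he₂def]
        exact congrArg f (congrArg t (Fin.ext (by simp; omega)))
    rw [h2 (phiT α β e₁ e₂ i)] at h1
    exact congrArg Fin.val (hf.injective h1)
  exact sig_ext hk ht hfeq

end RightInv

/-- For strong compositions `α`, `β`, the product of monomial quasisymmetric polynomials
is `M_α · M_β = ∑_γ c_{α,β}^γ M_γ`, where `c_{α,β}^γ` is the multiplicity of `γ` in the
overlapping shuffle product `α ⧢_o β`. -/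
theorem monomial_qsym_mult (n : ℕ) (α β : List ℕ)
    (hα : ∀ x ∈ α, 0 < x) (hβ : ∀ x ∈ β, 0 < x) :
    Mq n α * Mq n β =
      ∑ᶠ (γ : List ℕ) (_ : ∀ x ∈ γ, 0 < x), (ovShuffleMult α β γ : ℤ) • Mq n γ := by
  classical
  have step1 : ∀ γ : List ℕ,
      (∑ᶠ _ : (∀ x ∈ γ, 0 < x), (ovShuffleMult α β γ : ℤ) • Mq n γ)
        = (ovShuffleMult α β γ : ℤ) • Mq n γ := by
    intro γ
    rw [finsum_eq_if]
    split_ifs with h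
    · rfl
    · rw [mult_eq_zero α β hα hβ h, Nat.cast_zero, zero_smul]
  rw [finsum_congr step1]
  set res : ShufT α β → List ℕ := fun p => ovShuffleResult α β p.1.1 p.1.2 with hres
  have hsupp : (Function.support fun γ => (ovShuffleMult α β γ : ℤ) • Mq n γ)
      ⊆ ↑(Finset.image res Finset.univ) := by
    intro γ hγ
    simp only [Function.mem_support] at hγ
    have hm : ovShuffleMult α β γ ≠ 0 := by
      intro h0
      exact hγ (by rw [h0, Nat.cast_zero, zero_smul])
    rw [ovShuffleMult] at hm
    obtain ⟨⟨pp, hov, hresq⟩⟩ := (Nat.card_ne_zero.mp hm).1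
    simp only [Finset.coe_image, Set.mem_image, Finset.mem_coe, Finset.coe_univ,
      Set.image_univ, Set.mem_range]
    exact ⟨⟨pp, hov⟩, hresq⟩
  rw [finsum_eq_sum_of_support_subset _ hsupp]
  have step2 : ∀ γ ∈ Finset.image res Finset.univ,
      (ovShuffleMult α β γ : ℤ) • Mq n γ
        = ∑ p ∈ Finset.univ.filter (fun p => res p = γ), Mq n (res p) := by
    intro γ _
    rw [mult_eq_card α β γ]
    have : ∀ p ∈ Finset.univ.filter (fun p => res p = γ), Mq n (res p) = Mq n γ :=
      fun p hp => by rw [(Finset.mem_filter.mp hp).2]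
    rw [Finset.sum_congr rfl this, Finset.sum_const, Nat.cast_smul_eq_nsmul]
  rw [Finset.sum_congr rfl step2,
    Finset.sum_fiberwise_of_maps_to (fun p _ => Finset.mem_image_of_mem res (Finset.mem_univ p)) _]
  have step3 : ∀ p ∈ (Finset.univ : Finset (ShufT α β)),
      Mq n (res p) = ∑ f ∈ SM n p.1.1, xpow n (embed (res p) f) :=
    fun p _ => Mq_eq_sum (result_pos α β hα hβ p.2) (length_result α β p.1.2)
  rw [Finset.sum_congr rfl step3, Finset.sum_sigma']
  rw [Mq_eq_sum hα rfl, Mq_eq_sum hβ rfl, Finset.sum_mul_sum]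
  have step4 : ∀ e₁ ∈ SM n α.length, ∀ e₂ ∈ SM n β.length,
      xpow n (embed α e₁) * xpow n (embed β e₂)
        = xpow n (fun i => embed α e₁ i + embed β e₂ i) :=
    fun e₁ _ e₂ _ => (xpow_add).symm
  rw [Finset.sum_congr rfl (fun e₁ h₁ => Finset.sum_congr rfl (fun e₂ h₂ => step4 e₁ h₁ e₂ h₂)),
    ← Finset.sum_product']
  refine Finset.sum_bij'
    (fun q hq => (⟨⟨⟨_, phiT α β q.1 q.2⟩,
        phiOv (mem_SM.mp (Finset.mem_product.mp hq).1)
          (mem_SM.mp (Finset.mem_product.mp hq).2)⟩,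
      ⇑((unionS α β q.1 q.2).orderEmbOfFin rfl)⟩ : Σ p : ShufT α β, (Fin p.1.1 → Fin n)))
    (fun x hx => (fun a => x.2 (x.1.1.2 (Fin.castAdd β.length a)),
                  fun a => x.2 (x.1.1.2 (Fin.natAdd α.length a))))
    (fun q hq => Finset.mem_sigma.mpr
      ⟨Finset.mem_univ _, mem_SM.mpr ((unionS α β q.1 q.2).orderEmbOfFin rfl).strictMono⟩)
    ?hj ?left ?right ?comp
  case hj =>
    intro x hx
    have hf : StrictMono x.2 := mem_SM.mp (Finset.mem_sigma.mp hx).2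
    refine Finset.mem_product.mpr ⟨mem_SM.mpr ?_, mem_SM.mpr ?_⟩
    · intro a b hab
      exact hf (x.1.2.2 _ _ (by simpa using hab) (Or.inl (by simpa using b.2)))
    · intro a b hab
      exact hf (x.1.2.2 _ _ (by simp [hab]) (Or.inr (by simp)))
  case left =>
    intro q hq
    exact Prod.ext (funext fun a => phi_comp_left q.1 q.2 a)
      (funext fun a => phi_comp_right q.1 q.2 a)
  case right =>
    rintro ⟨⟨⟨k, t⟩, hov⟩, f⟩ hx
    exact phi_psi hov (mem_SM.mp (Finset.mem_sigma.mp hx).2) _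
  case comp =>
    intro q hq
    refine congrArg (xpow n) (funext fun i0 => ?_)
    have h1 : (fun j => (unionS α β q.1 q.2).orderEmbOfFin rfl
        (phiT α β q.1 q.2 (Fin.castAdd β.length j))) = q.1 :=
      funext fun a => phi_comp_left q.1 q.2 a
    have h2 : (fun j => (unionS α β q.1 q.2).orderEmbOfFin rfl
        (phiT α β q.1 q.2 (Fin.natAdd α.length j))) = q.2 :=
      funext fun a => phi_comp_right q.1 q.2 a
    exact (congrArg₂ (· + ·) (congrArg (fun g => embed α g i0) h1.symm)
      (congrArg (fun g => embed β g i0) h2.symm)).trans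
      (embed_add α β (phiT α β q.1 q.2) _ i0)
end

section
/- For every weak composition a, the fundamental slide polynomial expands positively in monomial slide polynomials: 𝔉_a = ∑ 𝔐_b, where the sum is over all weak compositions b with b ⊵ a and b^+ ⊨ a^+. -/
open MvPolynomial

/-- The monomial `x^b` in `n` variables, for a weak composition recorded as a list. -/
noncomputable def xlist (n : ℕ) (b : List ℕ) : MvPolynomial (Fin n) ℤ :=
  ∏ i : Fin n, X i ^ b.getD (i : ℕ) 0

/-- Dominance order: every partial sum of `b` is at least that of `a`. -/
def DomL (b a : List ℕ) : Prop := ∀ k, (a.take k).sum ≤ (b.take k).sum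

/-- The positive part of a weak composition: delete all zero entries. -/
def posL (b : List ℕ) : List ℕ := b.filter (fun x => x ≠ 0)

/-- `β` refines `α`: `α` is obtained by summing consecutive (nonempty) blocks of `β`. -/
def Refines (β α : List ℕ) : Prop :=
  ∃ L : List (List ℕ), L.flatten = β ∧ L.map List.sum = α ∧ ∀ l ∈ L, l ≠ []

/-- `b ⊵ a`: `b ≥ a` in dominance order, and every weak composition `c` with `c ≥ a`
and `c⁺ = b⁺` satisfies `c ≥ b`. -/
def Triang (b a : List ℕ) : Prop :=
  DomL b a ∧ ∀ c : List ℕ, DomL c a → posL c = posL b → DomL c b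

/-- The fundamental slide polynomial `𝔉_a` of a weak composition `a` of length `n`. -/
noncomputable def FSlide (n : ℕ) (a : List ℕ) : MvPolynomial (Fin n) ℤ :=
  ∑ᶠ (b : List ℕ) (_ : b.length = n ∧ DomL b a ∧ Refines (posL b) (posL a)), xlist n b

/-- The monomial slide polynomial `𝔐_b` of a weak composition `b` of length `n`. -/
noncomputable def MSlide (n : ℕ) (b : List ℕ) : MvPolynomial (Fin n) ℤ :=
  ∑ᶠ (c : List ℕ) (_ : c.length = n ∧ DomL c b ∧ posL c = posL b), xlist n c

-- Auxiliary development
def ps (l : List ℕ) (k : ℕ) : ℕ := (l.take k).sum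

@[simp] lemma ps_zero (l : List ℕ) : ps l 0 = 0 := rfl

@[simp] lemma ps_nil (k : ℕ) : ps [] k = 0 := by simp [ps]

@[simp] lemma ps_cons_succ (x : ℕ) (t : List ℕ) (k : ℕ) :
    ps (x :: t) (k + 1) = x + ps t k := by simp [ps, List.take_succ_cons]

lemma ps_mono (l : List ℕ) : Monotone (ps l) := by
  apply monotone_nat_of_le_succ
  intro k
  induction l generalizing k with
  | nil => simp
  | cons x t ih =>
    cases k with
    | zero => simp
    | succ k => simpa using ih k

lemma ps_le_sum (l : List ℕ) (k : ℕ) : ps l k ≤ l.sum := by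
  induction l generalizing k with
  | nil => simp
  | cons x t ih =>
    cases k with
    | zero => simp
    | succ k => simpa using ih k

lemma ps_of_length_le {l : List ℕ} {k : ℕ} (h : l.length ≤ k) : ps l k = l.sum := by
  simp [ps, List.take_of_length_le h]

lemma eq_of_ps_eq : ∀ (d e : List ℕ), d.length = e.length → (∀ k, ps d k = ps e k) → d = e := by
  intro d
  induction d with
  | nil => intro e hl _; exact (List.length_eq_zero_iff.mp hl.symm).symm
  | cons x t ih =>
    intro e hl hps
    cases e with
    | nil => simp at hl
    | cons y u =>
      have h1 := hps 1
      simp at h1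
      have h2 : t = u := by
        apply ih u (by simpa using hl)
        intro k
        have := hps (k + 1)
        simp [h1] at this
        omega
      rw [h1, h2]

@[simp] lemma posL_nil : posL [] = [] := rfl

lemma posL_cons_zero (t : List ℕ) : posL (0 :: t) = posL t := by simp [posL]

lemma posL_cons_pos {x : ℕ} (hx : x ≠ 0) (t : List ℕ) : posL (x :: t) = x :: posL t := by
  simp [posL, hx]

@[simp] lemma sum_posL (l : List ℕ) : (posL l).sum = l.sum := by
  induction l with
  | nil => rfl
  | cons x t ih =>
    rcases eq_or_ne x 0 with rfl | hx
    · simp [posL_cons_zero, ih]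
    · simp [posL_cons_pos hx, ih]

lemma range_ps_cons (z : ℕ) (t : List ℕ) :
    Set.range (ps (z :: t)) = insert 0 ((z + ·) '' Set.range (ps t)) := by
  ext a
  constructor
  · rintro ⟨k, rfl⟩
    cases k with
    | zero => exact Or.inl rfl
    | succ k => exact Or.inr ⟨ps t k, ⟨k, rfl⟩, by simp⟩
  · rintro (rfl | ⟨m, ⟨k, rfl⟩, rfl⟩)
    · exact ⟨0, rfl⟩
    · exact ⟨k + 1, by simp⟩

lemma range_ps_cons_zero (t : List ℕ) : Set.range (ps (0 :: t)) = Set.range (ps t) := by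
  rw [range_ps_cons]
  simp only [zero_add]
  rw [Set.image_id']
  exact Set.insert_eq_self.mpr ⟨0, rfl⟩

/-- KEY: the set of attained partial sums determines the positive part. -/
lemma posL_eq_of_range_ps_eq :
    ∀ (N : ℕ) (d e : List ℕ), d.length + e.length ≤ N →
      Set.range (ps d) = Set.range (ps e) → posL d = posL e := by
  intro N
  induction N with
  | zero =>
    intro d e hN _
    have hd : d = [] := List.length_eq_zero_iff.mp (by omega)
    have he : e = [] := List.length_eq_zero_iff.mp (by omega)
    rw [hd, he]
  | succ N ih =>
    intro d e hN h
    cases d with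
    | nil =>
      have hsum : e.sum = 0 := by
        have : ps e e.length ∈ Set.range (ps ([] : List ℕ)) := h ▸ ⟨e.length, rfl⟩
        obtain ⟨k, hk⟩ := this
        simp at hk
        rw [← ps_of_length_le (le_refl e.length), ← hk]
      have : ∀ x ∈ e, x = 0 := List.sum_eq_zero_iff.mp hsum
      have : posL e = [] := by
        simp only [posL, List.filter_eq_nil_iff]
        intro x hx; simpa using this x hx
      rw [this, posL_nil]
    | cons x t =>
      cases hx : x with
      | zero =>
        subst hx
        rw [posL_cons_zero]
        exact ih t e (by simp at hN ⊢; omega) ((range_ps_cons_zero t) ▸ h)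
      | succ x' =>
        subst hx
        cases e with
        | nil =>
          exfalso
          have : (x' + 1 : ℕ) ∈ Set.range (ps ([] : List ℕ)) := by
            rw [← h]; exact ⟨1, by simp⟩
          obtain ⟨k, hk⟩ := this
          simp at hk
        | cons y u =>
          cases hy : y with
          | zero =>
            subst hy
            rw [posL_cons_zero]
            exact ih ((x' + 1) :: t) u (by simp at hN ⊢; omega)
              (h.trans (range_ps_cons_zero u))
          | succ y' =>
            subst hy
            -- first entries agree
            have hxy : x' = y' := by
              have h1 : (x' + 1 : ℕ) ∈ Set.range (ps ((y' + 1) :: u)) := by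
                rw [← h]; exact ⟨1, by simp⟩
              have h2 : (y' + 1 : ℕ) ∈ Set.range (ps ((x' + 1) :: t)) := by
                rw [h]; exact ⟨1, by simp⟩
              obtain ⟨k, hk⟩ := h1
              obtain ⟨j, hj⟩ := h2
              cases k with
              | zero => simp at hk
              | succ k =>
                cases j with
                | zero => simp at hj
                | succ j => simp at hk hj; omega
            subst hxy
            have hrange : Set.range (ps t) = Set.range (ps u) := by
              ext a
              constructor
              · rintro ⟨k, rfl⟩
                have : (x' + 1 + ps t k : ℕ) ∈ Set.range (ps ((x' + 1) :: u)) := by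
                  rw [← h]; exact ⟨k + 1, by simp⟩
                obtain ⟨j, hj⟩ := this
                cases j with
                | zero => simp at hj; omega
                | succ j =>
                  simp at hj
                  exact ⟨j, by omega⟩
              · rintro ⟨k, rfl⟩
                have : (x' + 1 + ps u k : ℕ) ∈ Set.range (ps ((x' + 1) :: t)) := by
                  rw [h]; exact ⟨k + 1, by simp⟩
                obtain ⟨j, hj⟩ := this
                cases j with
                | zero => simp at hj; omega
                | succ j =>
                  simp at hj
                  exact ⟨j, by omega⟩
            rw [posL_cons_pos (by omega), posL_cons_pos (by omega)]
            rw [ih t u (by simp at hN ⊢; omega) hrange]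

lemma posL_eq_of_range_eq {d e : List ℕ}
    (h : Set.range (ps d) = Set.range (ps e)) : posL d = posL e :=
  posL_eq_of_range_ps_eq (d.length + e.length) d e le_rfl h

/-- KEY2: range of partial sums equals that of the positive part. -/
lemma range_ps_posL (l : List ℕ) : Set.range (ps (posL l)) = Set.range (ps l) := by
  induction l with
  | nil => rfl
  | cons x t ih =>
    rcases eq_or_ne x 0 with rfl | hx
    · rw [posL_cons_zero, range_ps_cons_zero, ih]
    · rw [posL_cons_pos hx, range_ps_cons, range_ps_cons, ih]

/-- min of two monotone functions with equal range has the same range. -/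
lemma range_min {f g : ℕ → ℕ} (hf : Monotone f) (hg : Monotone g)
    (h : Set.range f = Set.range g) :
    Set.range (fun k => min (f k) (g k)) = Set.range f := by
  ext v
  constructor
  · rintro ⟨k, rfl⟩
    rcases min_cases (f k) (g k) with ⟨h1, _⟩ | ⟨h1, _⟩
    · exact ⟨k, h1.symm⟩
    · rw [h]; exact ⟨k, h1.symm⟩
  · rintro ⟨k, rfl⟩
    have : f k ∈ Set.range g := h ▸ ⟨k, rfl⟩
    obtain ⟨j, hj⟩ := this
    rcases le_total k j with hkj | hkj
    · exact ⟨j, min_eq_right (hj ▸ hf hkj) |>.trans hj⟩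
    · refine ⟨k, ?_⟩
      have := hg hkj
      rw [hj] at this
      exact min_eq_left this



lemma domL_iff {b a : List ℕ} : DomL b a ↔ ∀ k, ps a k ≤ ps b k := Iff.rfl

/-- the list with prescribed partial sums -/
def listOfPS (f : ℕ → ℕ) (N : ℕ) : List ℕ := (List.range N).map fun k => f (k + 1) - f k

@[simp] lemma length_listOfPS (f : ℕ → ℕ) (N : ℕ) : (listOfPS f N).length = N := by
  simp [listOfPS]

lemma mem_listOfPS {f : ℕ → ℕ} {N x : ℕ} (h : x ∈ listOfPS f N) :
    ∃ k, x = f (k + 1) - f k := by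
  simp only [listOfPS, List.mem_map, List.mem_range] at h
  obtain ⟨k, _, rfl⟩ := h
  exact ⟨k, rfl⟩

lemma ps_listOfPS {f : ℕ → ℕ} (hf : Monotone f) (h0 : f 0 = 0) {N : ℕ} :
    ∀ k, k ≤ N → ps (listOfPS f N) k = f k := by
  intro k
  induction k with
  | zero => simp [h0]
  | succ k ih =>
    intro hk
    have hlt : k < (listOfPS f N).length := by simp; omega
    have : ps (listOfPS f N) (k + 1) = ps (listOfPS f N) k + (listOfPS f N)[k] := by
      simpa [ps] using List.sum_take_succ (listOfPS f N) k hlt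
    rw [this, ih (by omega)]
    have hget : (listOfPS f N)[k] = f (k + 1) - f k := by
      simp [listOfPS]
    rw [hget]
    have h2 := hf (by omega : k ≤ k + 1)
    omega

lemma ps_listOfPS_all {f : ℕ → ℕ} (hf : Monotone f) (h0 : f 0 = 0) {N : ℕ}
    (hsat : ∀ k, N ≤ k → f k = f N) : ∀ k, ps (listOfPS f N) k = f k := by
  intro k
  rcases le_or_gt k N with h | h
  · exact ps_listOfPS hf h0 k h
  · have h1 : ps (listOfPS f N) k = (listOfPS f N).sum :=
      ps_of_length_le (by simp; omega)
    have h2 : ps (listOfPS f N) N = (listOfPS f N).sum :=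
      ps_of_length_le (by simp)
    rw [h1, ← h2, ps_listOfPS hf h0 N le_rfl, hsat k (by omega)]

/-- the meet of two weak compositions, realizing pointwise min of partial sums -/
def meet2 (d e : List ℕ) : List ℕ :=
  listOfPS (fun k => min (ps d k) (ps e k)) (max d.length e.length)

lemma meet2_facts (d e : List ℕ) :
    Monotone (fun k => min (ps d k) (ps e k)) ∧ (fun k => min (ps d k) (ps e k)) 0 = 0 ∧
    ∀ k, max d.length e.length ≤ k →
      min (ps d k) (ps e k) = min (ps d (max d.length e.length)) (ps e (max d.length e.length)) := by
  refine ⟨(ps_mono d).min (ps_mono e), by simp, ?_⟩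
  intro k hk
  rw [ps_of_length_le (le_trans (le_max_left _ _) hk), ps_of_length_le (le_trans (le_max_right _ _) hk),
    ps_of_length_le (le_max_left _ _), ps_of_length_le (le_max_right _ _)]

lemma ps_meet2 (d e : List ℕ) (k : ℕ) : ps (meet2 d e) k = min (ps d k) (ps e k) := by
  obtain ⟨h1, h2, h3⟩ := meet2_facts d e
  exact ps_listOfPS_all h1 h2 h3 k

@[simp] lemma length_meet2 (d e : List ℕ) : (meet2 d e).length = max d.length e.length := by
  simp [meet2]

lemma range_ps_eq_of_posL_eq {d e : List ℕ} (h : posL d = posL e) :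
    Set.range (ps d) = Set.range (ps e) := by
  rw [← range_ps_posL d, h, range_ps_posL]

lemma posL_meet2 {d e : List ℕ} (h : posL d = posL e) : posL (meet2 d e) = posL d := by
  apply posL_eq_of_range_eq
  have h1 : ps (meet2 d e) = fun k => min (ps d k) (ps e k) := funext (ps_meet2 d e)
  rw [h1]
  exact range_min (ps_mono d) (ps_mono e) (range_ps_eq_of_posL_eq h)

lemma foldr_meet2_spec {n : ℕ} {a c : List ℕ} (hc : c.length = n) (hdom : DomL c a) :
    ∀ L : List (List ℕ), (∀ d ∈ L, d.length = n ∧ DomL d a ∧ posL d = posL c) →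
      (L.foldr meet2 c).length = n ∧ DomL (L.foldr meet2 c) a ∧
      posL (L.foldr meet2 c) = posL c ∧
      (∀ k, ps (L.foldr meet2 c) k ≤ ps c k) ∧
      (∀ d ∈ L, ∀ k, ps (L.foldr meet2 c) k ≤ ps d k) := by
  intro L
  induction L with
  | nil => exact fun _ => ⟨hc, hdom, rfl, fun k => le_rfl, by simp⟩
  | cons d L ih =>
    intro hmem
    obtain ⟨hlen, hda, hdp⟩ := hmem d List.mem_cons_self
    obtain ⟨ihlen, ihdom, ihpos, ihle, ihmin⟩ := ih (fun d' hd' => hmem d' (List.mem_cons_of_mem d hd'))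
    have hfold : (d :: L).foldr meet2 c = meet2 d (L.foldr meet2 c) := rfl
    rw [hfold]
    refine ⟨by simp [hlen, ihlen], ?_, ?_, ?_, ?_⟩
    · intro k
      have := ps_meet2 d (L.foldr meet2 c) k
      have h1 := hda k
      have h2 := ihdom k
      simp only [domL_iff] at *
      rw [show ((meet2 d (L.foldr meet2 c)).take k).sum = ps (meet2 d (L.foldr meet2 c)) k from rfl, this]
      exact le_min (hda k) (ihdom k)
    · rw [posL_meet2 (hdp.trans ihpos.symm), hdp]
    · intro k
      rw [ps_meet2]
      exact le_trans (min_le_right _ _) (ihle k)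
    · intro d' hd' k
      rw [ps_meet2]
      rcases List.mem_cons.mp hd' with rfl | hd'
      · exact min_le_left _ _
      · exact le_trans (min_le_right _ _) (ihmin d' hd' k)

/-- finite universe of candidate lists -/
noncomputable def Ufin (n s : ℕ) : Finset (List ℕ) :=
  Finset.image (fun f : Fin n → Fin (s + 1) => List.ofFn fun i => (f i : ℕ)) Finset.univ

lemma mem_Ufin_iff {n s : ℕ} {l : List ℕ} :
    l ∈ Ufin n s ↔ l.length = n ∧ ∀ x ∈ l, x ≤ s := by
  constructor
  · intro h
    obtain ⟨f, -, rfl⟩ := Finset.mem_image.mp h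
    refine ⟨by simp, ?_⟩
    intro x hx
    rw [List.mem_ofFn] at hx
    obtain ⟨i, rfl⟩ := hx
    exact Fin.is_le _
  · rintro ⟨rfl, h2⟩
    refine Finset.mem_image.mpr
      ⟨fun i => ⟨l[(i : ℕ)]'i.isLt, Nat.lt_succ_of_le (h2 _ (List.getElem_mem i.isLt))⟩,
       Finset.mem_univ _, ?_⟩
    apply List.ext_getElem (by simp)
    intro i h1 h2'
    simp

/-- Existence of the minimal element giving the Triang relation. -/
lemma exists_triang {n : ℕ} {a c : List ℕ} (ha : a.length = n) (hc : c.length = n)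
    (hdom : DomL c a) (hsum : c.sum = a.sum) :
    ∃ b, b.length = n ∧ Triang b a ∧ posL b = posL c ∧ DomL c b := by
  classical
  set s := a.sum with hs
  set V := (Ufin n s).filter (fun d => DomL d a ∧ posL d = posL c) with hV
  set L := V.toList with hL
  have hmemL : ∀ d ∈ L, d.length = n ∧ DomL d a ∧ posL d = posL c := by
    intro d hd
    rw [hL, Finset.mem_toList, hV, Finset.mem_filter] at hd
    exact ⟨(mem_Ufin_iff.mp hd.1).1, hd.2.1, hd.2.2⟩
  obtain ⟨hbl, hbd, hbp, hble, hmin⟩ := foldr_meet2_spec hc hdom L hmemL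
  set b := L.foldr meet2 c with hb
  refine ⟨b, hbl, ⟨hbd, ?_⟩, hbp, hble⟩
  intro c' hc'a hc'b
  -- sums
  have hsumb : b.sum = a.sum := by rw [← sum_posL b, hbp, sum_posL, hsum]
  have hsumc' : c'.sum = a.sum := by rw [← sum_posL c', hc'b, sum_posL, hsumb]
  have hpsan : ps a n = a.sum := ps_of_length_le (le_of_eq ha)
  have hpsc'n : ps c' n = c'.sum := by
    have h1 := hc'a n
    rw [domL_iff] at hc'a
    have := hc'a n
    have h2 := ps_le_sum c' n
    omega
  -- the meet of c' and b, cut at length n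
  set g : ℕ → ℕ := fun k => min (ps c' k) (ps b k) with hg
  have hgmono : Monotone g := (ps_mono c').min (ps_mono b)
  have hg0 : g 0 = 0 := by simp [hg]
  have hgsat : ∀ k, n ≤ k → g k = g n := by
    intro k hk
    have h1 : ps c' k = ps c' n := by
      have := ps_mono c' hk
      have := ps_le_sum c' k
      omega
    have h2 : ps b k = ps b n := by
      rw [ps_of_length_le (by omega : b.length ≤ k), ps_of_length_le (le_of_eq hbl)]
    simp only [hg, h1, h2]
  set d := listOfPS g n with hd
  have hpsd : ∀ k, ps d k = g k := ps_listOfPS_all hgmono hg0 hgsat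
  have hdlen : d.length = n := by simp [hd]
  have hdda : DomL d a := by
    rw [domL_iff]
    intro k
    rw [hpsd k]
    exact le_min (hc'a k) (hbd k)
  have hdp : posL d = posL c := by
    have h1 : posL d = posL c' := by
      apply posL_eq_of_range_eq
      have : ps d = g := funext hpsd
      rw [this, hg]
      exact range_min (ps_mono c') (ps_mono b) (range_ps_eq_of_posL_eq hc'b)
    rw [h1, posL_eq_of_range_eq (range_ps_eq_of_posL_eq hc'b), hbp]
  have hdU : d ∈ Ufin n s := by
    rw [mem_Ufin_iff]
    refine ⟨hdlen, ?_⟩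
    intro x hx
    obtain ⟨k, rfl⟩ := mem_listOfPS hx
    have h1 : g (k + 1) ≤ ps b (k + 1) := min_le_right _ _
    have h2 := ps_le_sum b (k + 1)
    omega
  have hdL : d ∈ L := by
    rw [hL, Finset.mem_toList, hV, Finset.mem_filter]
    exact ⟨hdU, hdda, hdp⟩
  rw [domL_iff]
  intro k
  have h1 := hmin d hdL k
  rw [hpsd k] at h1
  exact le_trans h1 (min_le_left _ _)


lemma triang_unique {n : ℕ} {a b b' : List ℕ} (hb : b.length = n) (hb' : b'.length = n)
    (ht : Triang b a) (ht' : Triang b' a) (hp : posL b = posL b') : b = b' := by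
  have h1 : DomL b' b := ht.2 b' ht'.1 hp.symm
  have h2 : DomL b b' := ht'.2 b ht.1 hp
  exact eq_of_ps_eq b b' (hb.trans hb'.symm) (fun k => le_antisymm (h1 k) (h2 k))

lemma refines_sum {p q : List ℕ} (h : Refines p q) : p.sum = q.sum := by
  obtain ⟨L, rfl, rfl, -⟩ := h
  exact List.sum_flatten

/-- The fundamental slide polynomial expands positively in monomial slide polynomials:
`𝔉_a = ∑ 𝔐_b`, summed over weak compositions `b` (of length `n`) with `b ⊵ a` and
`b⁺ ⊨ a⁺`. -/
theorem fslide_expands_in_mslide (n : ℕ) (a : List ℕ) (ha : a.length = n) :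
    FSlide n a =
      ∑ᶠ (b : List ℕ)
        (_ : b.length = n ∧ Triang b a ∧ Refines (posL b) (posL a)), MSlide n b := by
  classical
  have hsumF : ∀ l : List ℕ, Refines (posL l) (posL a) → l.sum = a.sum := fun l h => by
    rw [← sum_posL l, refines_sum h, sum_posL]
  have hmemU : ∀ l : List ℕ, l.length = n → l.sum = a.sum → l ∈ Ufin n a.sum := by
    intro l h1 h2
    refine mem_Ufin_iff.mpr ⟨h1, fun x hx => ?_⟩
    have := List.single_le_sum (fun y (_ : y ∈ l) => Nat.zero_le y) x hx
    omega
  have hLHS : FSlide n a = ∑ c ∈ (Ufin n a.sum).filter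
      (fun c => c.length = n ∧ DomL c a ∧ Refines (posL c) (posL a)), xlist n c := by
    rw [FSlide]
    apply finsum_cond_eq_sum_of_cond_iff
    intro c _
    constructor
    · intro h; exact Finset.mem_filter.mpr ⟨hmemU c h.1 (hsumF c h.2.2), h⟩
    · exact fun h => (Finset.mem_filter.mp h).2
  have hRHS : (∑ᶠ (b : List ℕ)
        (_ : b.length = n ∧ Triang b a ∧ Refines (posL b) (posL a)), MSlide n b)
      = ∑ b ∈ (Ufin n a.sum).filter
          (fun b => b.length = n ∧ Triang b a ∧ Refines (posL b) (posL a)), MSlide n b := by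
    apply finsum_cond_eq_sum_of_cond_iff
    intro b _
    constructor
    · intro h; exact Finset.mem_filter.mpr ⟨hmemU b h.1 (hsumF b h.2.2), h⟩
    · exact fun h => (Finset.mem_filter.mp h).2
  have hMS : ∀ b ∈ (Ufin n a.sum).filter
      (fun b => b.length = n ∧ Triang b a ∧ Refines (posL b) (posL a)),
      MSlide n b = ∑ c ∈ (Ufin n a.sum).filter
        (fun c => c.length = n ∧ DomL c b ∧ posL c = posL b), xlist n c := by
    intro b hb
    rw [Finset.mem_filter] at hb
    obtain ⟨hbU, hblen, hbt, hbr⟩ := hb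
    rw [MSlide]
    apply finsum_cond_eq_sum_of_cond_iff
    intro c _
    constructor
    · intro h
      refine Finset.mem_filter.mpr ⟨hmemU c h.1 ?_, h⟩
      rw [← sum_posL c, h.2.2, sum_posL, hsumF b hbr]
    · exact fun h => (Finset.mem_filter.mp h).2
  have hdisj : (↑((Ufin n a.sum).filter
      (fun b => b.length = n ∧ Triang b a ∧ Refines (posL b) (posL a))) :
        Set (List ℕ)).PairwiseDisjoint
      (fun b => (Ufin n a.sum).filter
        (fun c => c.length = n ∧ DomL c b ∧ posL c = posL b)) := by
    intro b hb b' hb' hne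
    simp only [Finset.mem_coe, Finset.mem_filter] at hb hb'
    refine Finset.disjoint_left.mpr ?_
    intro c hcb hcb'
    rw [Finset.mem_filter] at hcb hcb'
    exact hne (triang_unique hb.2.1 hb'.2.1 hb.2.2.1 hb'.2.2.1
      (hcb.2.2.2.symm.trans hcb'.2.2.2))
  have hcover : (Ufin n a.sum).filter
      (fun c => c.length = n ∧ DomL c a ∧ Refines (posL c) (posL a))
      = ((Ufin n a.sum).filter
          (fun b => b.length = n ∧ Triang b a ∧ Refines (posL b) (posL a))).biUnion
        (fun b => (Ufin n a.sum).filter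
          (fun c => c.length = n ∧ DomL c b ∧ posL c = posL b)) := by
    ext c
    simp only [Finset.mem_biUnion, Finset.mem_filter]
    constructor
    · rintro ⟨hcU, hclen, hcdom, hcref⟩
      obtain ⟨b, hbl, hbt, hbp, hccb⟩ := exists_triang ha hclen hcdom (hsumF c hcref)
      refine ⟨b, ⟨?_, hbl, hbt, ?_⟩, hcU, hclen, hccb, hbp.symm⟩
      · apply hmemU b hbl
        rw [← sum_posL b, hbp, sum_posL, hsumF c hcref]
      · rw [hbp]; exact hcref
    · rintro ⟨b, ⟨hbU, hblen, hbt, hbr⟩, hcU, hclen, hcdom, hcp⟩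
      refine ⟨hcU, hclen, ?_, ?_⟩
      · intro k; exact le_trans (hbt.1 k) (hcdom k)
      · rw [hcp]; exact hbr
  rw [hLHS, hRHS]
  have hstep : ∑ b ∈ (Ufin n a.sum).filter
      (fun b => b.length = n ∧ Triang b a ∧ Refines (posL b) (posL a)), MSlide n b
      = ∑ b ∈ (Ufin n a.sum).filter
          (fun b => b.length = n ∧ Triang b a ∧ Refines (posL b) (posL a)),
        ∑ c ∈ (Ufin n a.sum).filter
          (fun c => c.length = n ∧ DomL c b ∧ posL c = posL b), xlist n c :=
    Finset.sum_congr rfl hMS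
  rw [hstep, ← Finset.sum_biUnion hdisj, ← hcover]
end
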